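/- Let 0 < a ≤ 2 and let α : ℝ → [a,2] be continuous, let w : ℝ → ℝ be continuous, and let u ∈ ℝ satisfy |α(u) − α(v)| = o(1/|log|u−v||) as v → u. Then for every t ∈ ℝ, lim_{r→0⁺} ∫_{J(t)} | w(u+rz) · r^{1/α(u+rz) − 1/α(u)} − w(u) |^{a,2} dz = 0, where J(t) is the interval between 0 and t (i.e. [0,t] if t ≥ 0 and [t,0] if t < 0). Consequently the weighted multistable Lévy motion Y(t) = ∫ w(x)1_{[0,t]}(x) dM_α(x) satisfies the localisability condition of the main theorem at u with index h₀ = 1/α(u) and local form kernel k(t,z) = w(u)1_{[0,t]}(z). -/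

import Mathlib

open MeasureTheory Filter Set Topology ProbabilityTheory BoundedContinuousFunction

noncomputable section

/-- Membership in `F_α`: `f` is measurable and either a.e. zero or there is a (unique)
`λ > 0` with `∫ |f(x)/λ|^{α(x)} dx = 1`. -/
def MemFalpha (α f : ℝ → ℝ) : Prop :=
  Measurable f ∧ (f =ᵐ[volume] (0 : ℝ → ℝ) ∨ ∃ lam > (0:ℝ), ∫ x : ℝ, |f x / lam| ^ α x = 1)

/-- The quasinorm `‖f‖_α`, the unique `λ > 0` with `∫ |f(x)/λ|^{α(x)} dx = 1`
(and `0` if no such `λ` exists, e.g. if `f = 0` a.e.). -/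
def alphaNorm (α f : ℝ → ℝ) : ℝ :=
  sInf {lam : ℝ | 0 < lam ∧ ∫ x : ℝ, |f x / lam| ^ α x = 1}

/-- `|s|^{a,b} = max{|s|^a, |s|^b}`. -/
def pab (a b s : ℝ) : ℝ := max (|s| ^ a) (|s| ^ b)

/-- Membership in `F_{a,b}`: measurable with `∫ |f(x)|^{a,b} dx < ∞`. -/
def MemFab (a b : ℝ) (f : ℝ → ℝ) : Prop :=
  Measurable f ∧ Integrable (fun x : ℝ => pab a b (f x))

/-- The norm `‖f‖_p = (∫ |f(x)|^p dx)^{1/p}`. -/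
def pNorm (p : ℝ) (f : ℝ → ℝ) : ℝ := (∫ x : ℝ, |f x| ^ p) ^ (1 / p)

/-- Membership in `E₀`: Lebesgue measurable with finite Lebesgue measure. -/
def MemE0 (A : Set ℝ) : Prop := MeasurableSet A ∧ volume A < ⊤

/-- The signed indicator `1_{[0,t]}`, with the convention `1_{[u,v]} = −1_{[v,u]}`
for `v < u`. -/
def sgnInd (t x : ℝ) : ℝ :=
  if 0 ≤ t then (Set.Icc 0 t).indicator (fun _ => (1:ℝ)) x
  else -((Set.Icc t 0).indicator (fun _ => (1:ℝ)) x)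


set_option maxHeartbeats 1000000 in
/-- uniform smallness of `log r * (1/α(u+rz) - 1/α u)` -/
lemma unif_small (a : ℝ) (ha : 0 < a)
    (α : ℝ → ℝ) (hαc : Continuous α) (hα : ∀ x, α x ∈ Set.Icc a 2) (u : ℝ)
    (hlog : ∀ ε > (0:ℝ), ∃ δ > (0:ℝ), ∀ v : ℝ, v ≠ u → |u - v| < δ →
      |α u - α v| * |Real.log (|u - v|)| ≤ ε)
    (T : ℝ) (hT : 1 ≤ T) :
    ∀ ε > (0:ℝ), ∃ δ > (0:ℝ), δ ≤ 1 ∧ ∀ r : ℝ, 0 < r → r < δ → ∀ z : ℝ, |z| ≤ T →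
      |Real.log r * (1 / α (u + r * z) - 1 / α u)| ≤ ε := by
  intro ε hε
  have ha2 : (0:ℝ) < a * a := mul_pos ha ha
  have hαpos : ∀ x, 0 < α x := fun x => lt_of_lt_of_le ha (hα x).1
  obtain ⟨δ₁, hδ₁, h₁⟩ := hlog (ε * (a*a) / 2) (by positivity)
  have hlogT : (0:ℝ) ≤ Real.log T := Real.log_nonneg hT
  have hε₂ : (0:ℝ) < ε * (a*a) / (2 * (Real.log T + 1)) := by positivity
  obtain ⟨δ₂, hδ₂, h₂⟩ := Metric.continuousAt_iff.mp (hαc.continuousAt (x := u)) _ hε₂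
  have hTpos : (0:ℝ) < T := lt_of_lt_of_le one_pos hT
  refine ⟨min (min (δ₁ / T) (δ₂ / T)) 1, by positivity, min_le_right _ _, ?_⟩
  intro r hr hrδ z hzT
  rcases eq_or_ne z 0 with rfl | hz
  · simp only [mul_zero, add_zero]
    rw [show (1:ℝ)/α u - 1/α u = 0 by ring, mul_zero, abs_zero]; linarith
  · set v := u + r * z with hv
    have hz' : 0 < |z| := abs_pos.mpr hz
    have huv : |u - v| = r * |z| := by
      rw [hv]; rw [show u - (u + r * z) = -(r * z) by ring, abs_neg, abs_mul, abs_of_pos hr]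
    have huvpos : 0 < r * |z| := mul_pos hr hz'
    have hrT : r * |z| ≤ r * T := by nlinarith
    have hrδ₁ : r < δ₁ / T := lt_of_lt_of_le hrδ ((min_le_left _ _).trans (min_le_left _ _))
    have hrδ₂ : r < δ₂ / T := lt_of_lt_of_le hrδ ((min_le_left _ _).trans (min_le_right _ _))
    have hr1 : r < 1 := lt_of_lt_of_le hrδ (min_le_right _ _)
    have huvδ₁ : |u - v| < δ₁ := by
      rw [huv]; exact lt_of_le_of_lt hrT ((lt_div_iff₀ hTpos).mp hrδ₁)
    have huvδ₂ : |u - v| < δ₂ := by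
      rw [huv]; exact lt_of_le_of_lt hrT ((lt_div_iff₀ hTpos).mp hrδ₂)
    have hvne : v ≠ u := by
      rw [hv]; intro h; apply hz
      have : r * z = 0 := by linarith [h]
      exact (mul_eq_zero.mp this).resolve_left hr.ne'
    have key₁ : |α u - α v| * |Real.log (r * |z|)| ≤ ε * (a*a) / 2 := by
      have := h₁ v hvne huvδ₁; rwa [huv] at this
    have key₂ : |α u - α v| ≤ ε * (a*a) / (2 * (Real.log T + 1)) := by
      have := h₂ (x := v) (by rwa [Real.dist_eq, abs_sub_comm])
      rw [Real.dist_eq, abs_sub_comm] at this; exact this.le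
    -- |1/αv - 1/αu| ≤ |αu - αv| / (a*a)
    have hEbound : |1 / α v - 1 / α u| ≤ |α u - α v| / (a * a) := by
      have hv' := hαpos v; have hu' := hαpos u
      rw [div_sub_div _ _ hv'.ne' hu'.ne', abs_div, one_mul, mul_one]
      have habs : |α v * α u| = α v * α u := abs_of_pos (mul_pos hv' hu')
      rw [habs, abs_sub_comm]
      apply div_le_div_of_nonneg_left (abs_nonneg _) ha2
      have := (hα v).1; have := (hα u).1; nlinarith
    have hαdiff : (0:ℝ) ≤ |α u - α v| := abs_nonneg _
    have hlogr_neg : Real.log r < 0 := Real.log_neg hr hr1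
    -- two cases on |z| ≤ 1 or 1 < |z|
    have main : |Real.log r| * |α u - α v| ≤ ε * (a*a) / 2 + ε * (a*a) / 2 := by
      rcases le_or_gt (|z|) 1 with hz1 | hz1
      · have hlogle : Real.log (r * |z|) ≤ Real.log r := by
          apply Real.log_le_log huvpos; nlinarith
        have : |Real.log r| ≤ |Real.log (r * |z|)| := by
          rw [abs_of_nonpos hlogr_neg.le, abs_of_nonpos (by linarith)]; linarith
        nlinarith [abs_nonneg (Real.log (r * |z|))]
      · have hlogsplit : Real.log (r * |z|) = Real.log r + Real.log (|z|) := by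
          exact Real.log_mul hr.ne' (by positivity)
        have hzlog : Real.log (|z|) ≤ Real.log T := by
          apply Real.log_le_log (by linarith) hzT
        have hzlog0 : (0:ℝ) ≤ Real.log (|z|) := Real.log_nonneg hz1.le
        have htri : |Real.log r| ≤ |Real.log (r * |z|)| + Real.log T := by
          calc |Real.log r| = |Real.log (r * |z|) - Real.log (|z|)| := by
                rw [hlogsplit]; ring_nf
            _ ≤ |Real.log (r * |z|)| + |Real.log (|z|)| := abs_sub _ _
            _ ≤ |Real.log (r * |z|)| + Real.log T := by
                rw [abs_of_nonneg hzlog0]; linarith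
        have h2' : |α u - α v| * Real.log T ≤ ε * (a*a) / 2 := by
          calc |α u - α v| * Real.log T ≤ ε * (a*a) / (2 * (Real.log T + 1)) * Real.log T := by
                apply mul_le_mul_of_nonneg_right key₂ hlogT
            _ ≤ ε * (a*a) / 2 := by
                rw [div_mul_eq_mul_div, div_le_div_iff₀ (by positivity) (by norm_num)]
                nlinarith [mul_nonneg (mul_nonneg hε.le ha2.le) hlogT]
        nlinarith
    calc |Real.log r * (1 / α v - 1 / α u)| = |Real.log r| * |1 / α v - 1 / α u| := abs_mul _ _
      _ ≤ |Real.log r| * (|α u - α v| / (a*a)) := by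
          apply mul_le_mul_of_nonneg_left hEbound (abs_nonneg _)
      _ = |Real.log r| * |α u - α v| / (a*a) := by ring
      _ ≤ (ε * (a*a) / 2 + ε * (a*a) / 2) / (a*a) := by
          gcongr
      _ = ε := by field_simp <;> norm_num

lemma pab_nonneg (a b s : ℝ) : 0 ≤ pab a b s :=
  le_trans (Real.rpow_nonneg (abs_nonneg s) a) (le_max_left _ _)

lemma pab_zero (a : ℝ) (ha : 0 < a) : pab a 2 0 = 0 := by
  simp [pab, Real.zero_rpow ha.ne', Real.zero_rpow (two_ne_zero (α := ℝ))]

lemma pab_abs_congr (a b s s' : ℝ) (h : |s| = |s'|) : pab a b s = pab a b s' := by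
  simp [pab, h]

lemma pab_mono (a s C : ℝ) (ha : 0 ≤ a) (hC : 0 ≤ C) (h : |s| ≤ C) : pab a 2 s ≤ pab a 2 C := by
  have hC' : |C| = C := abs_of_nonneg hC
  unfold pab
  rw [hC']
  exact max_le_max (Real.rpow_le_rpow (abs_nonneg s) h ha)
    (Real.rpow_le_rpow (abs_nonneg s) h (by norm_num))

lemma pab_continuous (a : ℝ) (ha : 0 < a) : Continuous (fun s : ℝ => pab a 2 s) := by
  apply Continuous.max
  · rw [continuous_iff_continuousAt]
    intro x
    exact (Real.continuousAt_rpow_const _ _ (Or.inr ha.le)).comp continuous_abs.continuousAt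
  · rw [continuous_iff_continuousAt]
    intro x
    exact (Real.continuousAt_rpow_const _ _ (Or.inr (by norm_num))).comp continuous_abs.continuousAt

lemma abs_le_of_mem_uIcc {t z : ℝ} (hz : z ∈ Set.uIcc 0 t) : |z| ≤ max |t| 1 := by
  rcases Set.mem_uIcc.mp hz with ⟨h, h'⟩ | ⟨h, h'⟩ <;> rw [abs_le] <;> constructor <;>
    [skip; skip; skip; skip] <;>
    nlinarith [le_abs_self t, neg_abs_le t, le_max_left (|t|) (1:ℝ), le_max_right (|t|) (1:ℝ)]

set_option maxHeartbeats 1000000 in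
lemma part1 (a : ℝ) (ha : 0 < a) (ha2 : a ≤ 2)
    (α : ℝ → ℝ) (hαc : Continuous α) (hα : ∀ x, α x ∈ Set.Icc a 2)
    (w : ℝ → ℝ) (hw : Continuous w) (u : ℝ)
    (hlog : ∀ ε > (0:ℝ), ∃ δ > (0:ℝ), ∀ v : ℝ, v ≠ u → |u - v| < δ →
      |α u - α v| * |Real.log (|u - v|)| ≤ ε) (t : ℝ) :
    Tendsto (fun r : ℝ => ∫ z in Set.uIcc 0 t,
        pab a 2 (w (u + r * z) * r ^ (1 / α (u + r * z) - 1 / α u) - w u))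
      (𝓝[>] (0:ℝ)) (𝓝 0) := by
  set T : ℝ := max |t| 1 with hT
  have hT1 : (1:ℝ) ≤ T := le_max_right _ _
  have hTpos : (0:ℝ) < T := lt_of_lt_of_le one_pos hT1
  -- uniform bound with ε = 1
  obtain ⟨δ₀, hδ₀, hδ₀1, hB⟩ := unif_small a ha α hαc hα u hlog T hT1 1 one_pos
  -- bound on w
  obtain ⟨M, hM⟩ := (isCompact_Icc (a := u - T) (b := u + T)).exists_bound_of_continuousOn
    hw.continuousOn
  have hMu : |w u| ≤ M := by
    have := hM u ⟨by linarith, by linarith⟩; rwa [Real.norm_eq_abs] at this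
  have hM0 : (0:ℝ) ≤ M := le_trans (abs_nonneg _) hMu
  set C : ℝ := M * Real.exp 1 + M with hC
  have hC0 : (0:ℝ) ≤ C := by positivity
  -- the common bound on the integrand argument
  have argbound : ∀ r ∈ Set.Ioo (0:ℝ) δ₀, ∀ z ∈ Set.uIcc 0 t,
      |w (u + r * z) * r ^ (1 / α (u + r * z) - 1 / α u) - w u| ≤ C := by
    intro r hr z hz
    have hzT := abs_le_of_mem_uIcc hz
    have hrz : u + r * z ∈ Set.Icc (u - T) (u + T) := by
      constructor <;> nlinarith [abs_le.mp hzT, hr.1, hr.2, hδ₀1]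
    have hwb : |w (u + r * z)| ≤ M := by
      have := hM _ hrz; rwa [Real.norm_eq_abs] at this
    have hexp : r ^ (1 / α (u + r * z) - 1 / α u) ≤ Real.exp 1 := by
      rw [Real.rpow_def_of_pos hr.1]
      apply Real.exp_le_exp.mpr
      calc Real.log r * (1 / α (u + r * z) - 1 / α u)
          ≤ |Real.log r * (1 / α (u + r * z) - 1 / α u)| := le_abs_self _
        _ ≤ 1 := hB r hr.1 hr.2 z hzT
    have hexp0 : (0:ℝ) ≤ r ^ (1 / α (u + r * z) - 1 / α u) := Real.rpow_nonneg hr.1.le _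
    calc |w (u + r * z) * r ^ (1 / α (u + r * z) - 1 / α u) - w u|
        ≤ |w (u + r * z) * r ^ (1 / α (u + r * z) - 1 / α u)| + |w u| := abs_sub _ _
      _ ≤ M * Real.exp 1 + M := by
          rw [abs_mul, abs_of_nonneg hexp0]
          have : |w (u + r * z)| * (r ^ (1 / α (u + r * z) - 1 / α u)) ≤ M * Real.exp 1 :=
            mul_le_mul hwb hexp hexp0 hM0
          linarith
  -- dominated convergence
  have h0 : (0:ℝ) = ∫ z in Set.uIcc 0 t, (0:ℝ) := by simp
  rw [show (𝓝 (0:ℝ)) = 𝓝 (∫ z in Set.uIcc 0 t, (0:ℝ)) by rw [← h0]]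
  apply tendsto_integral_filter_of_dominated_convergence (fun _ => pab a 2 C)
  · -- measurability
    filter_upwards [Ioo_mem_nhdsGT hδ₀] with r hr
    have : Continuous fun z : ℝ =>
        pab a 2 (w (u + r * z) * r ^ (1 / α (u + r * z) - 1 / α u) - w u) := by
      apply (pab_continuous a ha).comp
      apply Continuous.sub _ continuous_const
      apply Continuous.mul (hw.comp (continuous_const.add (continuous_const.mul continuous_id)))
      have : (fun z : ℝ => r ^ (1 / α (u + r * z) - 1 / α u)) =
          fun z : ℝ => Real.exp (Real.log r * (1 / α (u + r * z) - 1 / α u)) := by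
        funext z; rw [Real.rpow_def_of_pos hr.1]
      rw [this]
      apply Real.continuous_exp.comp
      apply continuous_const.mul
      apply Continuous.sub _ continuous_const
      apply Continuous.div continuous_const (hαc.comp (continuous_const.add (continuous_const.mul continuous_id)))
      intro z
      exact (lt_of_lt_of_le ha (hα _).1).ne'
    exact this.aestronglyMeasurable
  · -- bound
    filter_upwards [Ioo_mem_nhdsGT hδ₀] with r hr
    rw [ae_restrict_iff' measurableSet_uIcc]
    apply Eventually.of_forall
    intro z hz
    rw [Real.norm_eq_abs, abs_of_nonneg (pab_nonneg _ _ _)]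
    exact pab_mono a _ C ha.le hC0 (argbound r hr z hz)
  · -- integrability of bound
    refine (integrableOn_const_iff).mpr (Or.inr ?_)
    rw [Set.uIcc, Real.volume_Icc]
    exact ENNReal.ofReal_lt_top
  · -- pointwise limit
    rw [ae_restrict_iff' measurableSet_uIcc]
    apply Eventually.of_forall
    intro z hz
    have hzT := abs_le_of_mem_uIcc hz
    -- limit of the exponent product
    have hlim1 : Tendsto (fun r : ℝ => Real.log r * (1 / α (u + r * z) - 1 / α u))
        (𝓝[>] (0:ℝ)) (𝓝 0) := by
      rw [Metric.tendsto_nhds]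
      intro ε hε
      obtain ⟨δ, hδ, _, h⟩ := unif_small a ha α hαc hα u hlog T hT1 (ε/2) (by positivity)
      filter_upwards [Ioo_mem_nhdsGT hδ] with r hr
      rw [Real.dist_eq, sub_zero]
      exact lt_of_le_of_lt (h r hr.1 hr.2 z hzT) (by linarith)
    have hlim2 : Tendsto (fun r : ℝ => r ^ (1 / α (u + r * z) - 1 / α u))
        (𝓝[>] (0:ℝ)) (𝓝 1) := by
      have : Tendsto (fun r : ℝ => Real.exp (Real.log r * (1 / α (u + r * z) - 1 / α u)))
          (𝓝[>] (0:ℝ)) (𝓝 1) := by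
        have := (Real.continuous_exp.tendsto 0).comp hlim1
        simpa [Function.comp_def] using this
      apply this.congr'
      filter_upwards [self_mem_nhdsWithin] with r hr
      rw [Real.rpow_def_of_pos hr]
    have hlim3 : Tendsto (fun r : ℝ => w (u + r * z)) (𝓝[>] (0:ℝ)) (𝓝 (w u)) := by
      have h1 : Tendsto (fun r : ℝ => u + r * z) (𝓝 (0:ℝ)) (𝓝 u) := by
        have : Tendsto (fun r : ℝ => u + r * z) (𝓝 (0:ℝ)) (𝓝 (u + 0 * z)) := by
          apply Tendsto.add tendsto_const_nhds (Tendsto.mul tendsto_id tendsto_const_nhds)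
        simpa using this
      exact ((hw.tendsto u).comp h1).mono_left nhdsWithin_le_nhds
    have hlim4 : Tendsto (fun r : ℝ =>
        w (u + r * z) * r ^ (1 / α (u + r * z) - 1 / α u) - w u) (𝓝[>] (0:ℝ)) (𝓝 0) := by
      have := (hlim3.mul hlim2).sub_const (w u)
      simpa using this
    have := ((pab_continuous a ha).tendsto 0).comp hlim4
    rw [pab_zero a ha] at this
    exact this

lemma ite_and_mul (p q : Prop) [Decidable p] [Decidable q] :
    (if p ∧ q then (1:ℝ) else 0) = (if p then (1:ℝ) else 0) * (if q then 1 else 0) := by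
  by_cases hp : p <;> by_cases hq : q <;> simp [hp, hq]


set_option maxHeartbeats 4000000 in
lemma sgnInd_sub (u b c : ℝ) (hub : u + b ≠ 0) (hb : b ≠ 0) (hbc : b ≠ c) :
    sgnInd (u + c) (u + b) - sgnInd u (u + b) = sgnInd c b := by
  simp only [sgnInd, Set.indicator_apply, Set.mem_Icc, ite_and_mul]
  split_ifs <;> (try simp only [not_le] at *) <;>
    first
      | linarith
      | exact hub.lt_or_gt.elim (fun h => by linarith) (fun h => by linarith)
      | exact hb.lt_or_gt.elim (fun h => by linarith) (fun h => by linarith)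
      | exact hbc.lt_or_gt.elim (fun h => by linarith) (fun h => by linarith)
      | exact hb.lt_or_gt.elim
          (fun h => hbc.lt_or_gt.elim (fun h' => by linarith) (fun h' => by linarith))
          (fun h => hbc.lt_or_gt.elim (fun h' => by linarith) (fun h' => by linarith))
      | exact hub.lt_or_gt.elim
          (fun h => hb.lt_or_gt.elim (fun h' => by linarith) (fun h' => by linarith))
          (fun h => hb.lt_or_gt.elim (fun h' => by linarith) (fun h' => by linarith))

lemma sgnInd_scale {r : ℝ} (hr : 0 < r) (t z : ℝ) : sgnInd (r * t) (r * z) = sgnInd t z := by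
  have h1 : (0 ≤ r * t) ↔ 0 ≤ t := mul_nonneg_iff_of_pos_left hr
  have h2 : (0 ≤ r * z) ↔ 0 ≤ z := mul_nonneg_iff_of_pos_left hr
  have h3 : (r * z ≤ r * t) ↔ z ≤ t := mul_le_mul_iff_right₀ hr
  have h4 : (r * t ≤ r * z) ↔ t ≤ z := mul_le_mul_iff_right₀ hr
  have h5 : (r * z ≤ 0) ↔ z ≤ 0 := by constructor <;> intro h <;> nlinarith
  simp only [sgnInd, Set.indicator_apply, Set.mem_Icc, h1, h2, h3, h4, h5]

lemma sgnInd_abs_one {t z : ℝ} (hz0 : z ≠ 0) (hzt : z ≠ t) (hz : z ∈ Set.uIcc 0 t) :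
    |sgnInd t z| = 1 := by
  rcases lt_trichotomy t 0 with ht | rfl | ht
  · rw [Set.uIcc_of_ge ht.le] at hz
    rw [sgnInd, if_neg (not_le.mpr ht), Set.indicator_of_mem hz]
    norm_num
  · rw [Set.uIcc_self] at hz
    exact absurd hz hz0
  · rw [Set.uIcc_of_le ht.le] at hz
    rw [sgnInd, if_pos ht.le, Set.indicator_of_mem hz]
    norm_num

lemma sgnInd_eq_zero {t z : ℝ} (hz : z ∉ Set.uIcc 0 t) : sgnInd t z = 0 := by
  rcases le_or_gt 0 t with ht | ht
  · rw [Set.uIcc_of_le ht] at hz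
    rw [sgnInd, if_pos ht, Set.indicator_of_notMem hz]
  · rw [Set.uIcc_of_ge ht.le] at hz
    rw [sgnInd, if_neg (not_le.mpr ht), Set.indicator_of_notMem hz, neg_zero]

lemma part2_integral_eq (a : ℝ) (ha : 0 < a) (α : ℝ → ℝ) (hα : ∀ x, α x ∈ Set.Icc a 2)
    (w : ℝ → ℝ) (u t r : ℝ) (hr : 0 < r) :
    (∫ z : ℝ, pab a 2 ((w (u + r * z) * sgnInd (u + r * t) (u + r * z) -
          w (u + r * z) * sgnInd u (u + r * z)) /
        r ^ (1 / α u - 1 / α (u + r * z)) - w u * sgnInd t z))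
    = ∫ z in Set.uIcc 0 t,
        pab a 2 (w (u + r * z) * r ^ (1 / α (u + r * z) - 1 / α u) - w u) := by
  rw [← MeasureTheory.integral_indicator measurableSet_uIcc]
  apply integral_congr_ae
  have h1 : ∀ᵐ z : ℝ ∂volume, z ≠ (0:ℝ) := by
    rw [ae_iff]
    have h : {z : ℝ | ¬ z ≠ 0} = {(0:ℝ)} := by ext z; simp
    rw [h]; exact measure_singleton 0
  have h2 : ∀ᵐ z : ℝ ∂volume, z ≠ t := by
    rw [ae_iff]
    have h : {z : ℝ | ¬ z ≠ t} = {t} := by ext z; simp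
    rw [h]; exact measure_singleton t
  have h3 : ∀ᵐ z : ℝ ∂volume, u + r * z ≠ 0 := by
    rw [ae_iff]
    apply measure_mono_null (t := {-u / r})
    · intro z hz
      simp only [Set.mem_setOf_eq, not_not] at hz
      simp only [Set.mem_singleton_iff]
      rw [eq_div_iff hr.ne']
      linarith
    · exact measure_singleton _
  filter_upwards [h1, h2, h3] with z hz0 hzt huz
  have hb : r * z ≠ 0 := mul_ne_zero hr.ne' hz0
  have hbc : r * z ≠ r * t := fun h => hzt (mul_left_cancel₀ hr.ne' h)
  have hdiff : sgnInd (u + r * t) (u + r * z) - sgnInd u (u + r * z) = sgnInd t z := by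
    have h := sgnInd_sub u (r * z) (r * t) huz hb hbc
    rwa [sgnInd_scale hr] at h
  have hnum : w (u + r * z) * sgnInd (u + r * t) (u + r * z) -
      w (u + r * z) * sgnInd u (u + r * z) = w (u + r * z) * sgnInd t z := by
    rw [← mul_sub, hdiff]
  have hrpow : r ^ (1 / α u - 1 / α (u + r * z)) =
      (r ^ (1 / α (u + r * z) - 1 / α u))⁻¹ := by
    rw [← Real.rpow_neg hr.le]
    congr 1; ring
  rw [hnum, hrpow, div_eq_mul_inv, inv_inv]
  by_cases hzin : z ∈ Set.uIcc 0 t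
  · rw [Set.indicator_of_mem hzin]
    apply pab_abs_congr
    have hσ := sgnInd_abs_one hz0 hzt hzin
    rw [show w (u + r * z) * sgnInd t z * r ^ (1 / α (u + r * z) - 1 / α u) - w u * sgnInd t z
        = sgnInd t z * (w (u + r * z) * r ^ (1 / α (u + r * z) - 1 / α u) - w u) by ring,
      abs_mul, hσ, one_mul]
  · rw [Set.indicator_of_notMem hzin, sgnInd_eq_zero hzin]
    rw [show w (u + r * z) * 0 * r ^ (1 / α (u + r * z) - 1 / α u) - w u * 0 = 0 by ring,
      pab_zero a ha]

/-- localisability of weighted multistable Lévy motion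
`Y(t) = ∫ w(x)1_{[0,t]}(x) dM_α(x)`: with `J(t) = uIcc 0 t`,
`∫_{J(t)} |w(u+rz) r^{1/α(u+rz)−1/α(u)} − w(u)|^{a,2} dz → 0` as `r → 0⁺`, and
consequently the kernel `f(t,x) = w(x)1_{[0,t]}(x)` satisfies the localisability
condition of the main theorem at `u` with index `h₀ = 1/α(u)` and limit kernel
`k(t,z) = w(u)1_{[0,t]}(z)`. -/
theorem weighted_multistable_levy_localisable (a : ℝ) (ha : 0 < a) (ha2 : a ≤ 2)
    (α : ℝ → ℝ) (hαc : Continuous α) (hα : ∀ x, α x ∈ Set.Icc a 2)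
    (w : ℝ → ℝ) (hw : Continuous w) (u : ℝ)
    (hlog : ∀ ε > (0:ℝ), ∃ δ > (0:ℝ), ∀ v : ℝ, v ≠ u → |u - v| < δ →
      |α u - α v| * |Real.log (|u - v|)| ≤ ε) :
    (∀ t : ℝ,
      Tendsto (fun r : ℝ => ∫ z in Set.uIcc 0 t,
          pab a 2 (w (u + r * z) * r ^ (1 / α (u + r * z) - 1 / α u) - w u))
        (𝓝[>] (0:ℝ)) (𝓝 0)) ∧
    (∀ t : ℝ,
      Tendsto (fun r : ℝ => ∫ z : ℝ,
          pab a 2 ((w (u + r * z) * sgnInd (u + r * t) (u + r * z) -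
              w (u + r * z) * sgnInd u (u + r * z)) /
            r ^ (1 / α u - 1 / α (u + r * z)) - w u * sgnInd t z))
        (𝓝[>] (0:ℝ)) (𝓝 0)) := by
  constructor
  · intro t
    exact part1 a ha ha2 α hαc hα w hw u hlog t
  · intro t
    refine Filter.Tendsto.congr' ?_ (part1 a ha ha2 α hαc hα w hw u hlog t)
    filter_upwards [self_mem_nhdsWithin] with r hr
    exact (part2_integral_eq a ha α hα w u t r hr).symm
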